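/- Let F be a nonzero null two-form on the Minkowski vector space: F is an antisymmetric 4×4 real matrix with both invariants vanishing, I₁ := F_{μν}F^{μν} = 0 and I₂ := F*_{μν}F^{μν} = 0. Then there exist a nonzero null vector l and a spacelike vector w, orthogonal to l (i.e. η(l,w) = 0), such that F_{μν} = l_μ w_ν - l_ν w_μ. -/

import Mathlib

open Matrix BigOperators

/-- The Minkowski metric `η = diag(-1,1,1,1)` on `ℝ⁴`. -/
noncomputable def ηm : Matrix (Fin 4) (Fin 4) ℝ := Matrix.diagonal ![(-1 : ℝ), 1, 1, 1]

/-- Minkowski inner product of two (co)vectors. -/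
noncomputable def minkDot (u v : Fin 4 → ℝ) : ℝ := ∑ μ, ∑ ν, ηm μ ν * u μ * v ν

/-- Raising both indices of a two-form with the Minkowski metric:
`F^{μν} = η^{μα} η^{νβ} F_{αβ}` (numerically `η F η` since `η⁻¹ = η`). -/
noncomputable def raiseF (F : Matrix (Fin 4) (Fin 4) ℝ) : Matrix (Fin 4) (Fin 4) ℝ :=
  ηm * F * ηm

/-- The totally antisymmetric Levi-Civita symbol `ε_{abcd}` with `ε_{0123} = 1`,
realized as the determinant of the matrix whose rows are the standard basis
vectors `e_a, e_b, e_c, e_d`. -/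
noncomputable def epsLC (a b c d : Fin 4) : ℝ :=
  Matrix.det (Matrix.of fun i j => if ![a, b, c, d] i = j then (1 : ℝ) else 0)

/-- The Hodge dual `F*_{μν} = (1/2) η_{μναβ} F^{αβ}` of a two-form. -/
noncomputable def hodge (F : Matrix (Fin 4) (Fin 4) ℝ) : Matrix (Fin 4) (Fin 4) ℝ :=
  Matrix.of fun μ ν => (1 / 2) * ∑ α, ∑ β, epsLC μ ν α β * raiseF F α β

lemma epsLC_dup (a b c d : Fin 4) (h : a=b ∨ a=c ∨ a=d ∨ b=c ∨ b=d ∨ c=d) : epsLC a b c d = 0 := by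
  unfold epsLC
  rcases h with h|h|h|h|h|h
  · exact Matrix.det_zero_of_row_eq (show (0:Fin 4) ≠ 1 by decide) (by subst h; funext j; simp; rfl)
  · exact Matrix.det_zero_of_row_eq (show (0:Fin 4) ≠ 2 by decide) (by subst h; funext j; simp; rfl)
  · exact Matrix.det_zero_of_row_eq (show (0:Fin 4) ≠ 3 by decide) (by subst h; funext j; simp; rfl)
  · exact Matrix.det_zero_of_row_eq (show (1:Fin 4) ≠ 2 by decide) (by subst h; funext j; simp; rfl)
  · exact Matrix.det_zero_of_row_eq (show (1:Fin 4) ≠ 3 by decide) (by subst h; funext j; simp; rfl)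
  · exact Matrix.det_zero_of_row_eq (show (2:Fin 4) ≠ 3 by decide) (by subst h; funext j; simp; rfl)

lemma eps_0123 : epsLC 0 1 2 3 = 1 := by
  have h : (Matrix.of fun i j => if ![(0:Fin 4),1,2,3] i = j then (1:ℝ) else 0)
      = !![1, 0, 0, 0; 0, 1, 0, 0; 0, 0, 1, 0; 0, 0, 0, 1] := by
    ext i j; fin_cases i <;> fin_cases j <;> rfl
  rw [epsLC, h]
  simp [Matrix.det_succ_row_zero, Fin.sum_univ_succ, Fin.succAbove] <;> norm_num

lemma eps_0132 : epsLC 0 1 3 2 = -1 := by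
  have h : (Matrix.of fun i j => if ![(0:Fin 4),1,3,2] i = j then (1:ℝ) else 0)
      = !![1, 0, 0, 0; 0, 1, 0, 0; 0, 0, 0, 1; 0, 0, 1, 0] := by
    ext i j; fin_cases i <;> fin_cases j <;> rfl
  rw [epsLC, h]
  simp [Matrix.det_succ_row_zero, Fin.sum_univ_succ, Fin.succAbove] <;> norm_num

lemma eps_0213 : epsLC 0 2 1 3 = -1 := by
  have h : (Matrix.of fun i j => if ![(0:Fin 4),2,1,3] i = j then (1:ℝ) else 0)
      = !![1, 0, 0, 0; 0, 0, 1, 0; 0, 1, 0, 0; 0, 0, 0, 1] := by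
    ext i j; fin_cases i <;> fin_cases j <;> rfl
  rw [epsLC, h]
  simp [Matrix.det_succ_row_zero, Fin.sum_univ_succ, Fin.succAbove] <;> norm_num

lemma eps_0231 : epsLC 0 2 3 1 = 1 := by
  have h : (Matrix.of fun i j => if ![(0:Fin 4),2,3,1] i = j then (1:ℝ) else 0)
      = !![1, 0, 0, 0; 0, 0, 1, 0; 0, 0, 0, 1; 0, 1, 0, 0] := by
    ext i j; fin_cases i <;> fin_cases j <;> rfl
  rw [epsLC, h]
  simp [Matrix.det_succ_row_zero, Fin.sum_univ_succ, Fin.succAbove] <;> norm_num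

lemma eps_0312 : epsLC 0 3 1 2 = 1 := by
  have h : (Matrix.of fun i j => if ![(0:Fin 4),3,1,2] i = j then (1:ℝ) else 0)
      = !![1, 0, 0, 0; 0, 0, 0, 1; 0, 1, 0, 0; 0, 0, 1, 0] := by
    ext i j; fin_cases i <;> fin_cases j <;> rfl
  rw [epsLC, h]
  simp [Matrix.det_succ_row_zero, Fin.sum_univ_succ, Fin.succAbove] <;> norm_num

lemma eps_0321 : epsLC 0 3 2 1 = -1 := by
  have h : (Matrix.of fun i j => if ![(0:Fin 4),3,2,1] i = j then (1:ℝ) else 0)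
      = !![1, 0, 0, 0; 0, 0, 0, 1; 0, 0, 1, 0; 0, 1, 0, 0] := by
    ext i j; fin_cases i <;> fin_cases j <;> rfl
  rw [epsLC, h]
  simp [Matrix.det_succ_row_zero, Fin.sum_univ_succ, Fin.succAbove] <;> norm_num

lemma eps_1023 : epsLC 1 0 2 3 = -1 := by
  have h : (Matrix.of fun i j => if ![(1:Fin 4),0,2,3] i = j then (1:ℝ) else 0)
      = !![0, 1, 0, 0; 1, 0, 0, 0; 0, 0, 1, 0; 0, 0, 0, 1] := by
    ext i j; fin_cases i <;> fin_cases j <;> rfl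
  rw [epsLC, h]
  simp [Matrix.det_succ_row_zero, Fin.sum_univ_succ, Fin.succAbove] <;> norm_num

lemma eps_1032 : epsLC 1 0 3 2 = 1 := by
  have h : (Matrix.of fun i j => if ![(1:Fin 4),0,3,2] i = j then (1:ℝ) else 0)
      = !![0, 1, 0, 0; 1, 0, 0, 0; 0, 0, 0, 1; 0, 0, 1, 0] := by
    ext i j; fin_cases i <;> fin_cases j <;> rfl
  rw [epsLC, h]
  simp [Matrix.det_succ_row_zero, Fin.sum_univ_succ, Fin.succAbove] <;> norm_num

lemma eps_1203 : epsLC 1 2 0 3 = 1 := by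
  have h : (Matrix.of fun i j => if ![(1:Fin 4),2,0,3] i = j then (1:ℝ) else 0)
      = !![0, 1, 0, 0; 0, 0, 1, 0; 1, 0, 0, 0; 0, 0, 0, 1] := by
    ext i j; fin_cases i <;> fin_cases j <;> rfl
  rw [epsLC, h]
  simp [Matrix.det_succ_row_zero, Fin.sum_univ_succ, Fin.succAbove] <;> norm_num

lemma eps_1230 : epsLC 1 2 3 0 = -1 := by
  have h : (Matrix.of fun i j => if ![(1:Fin 4),2,3,0] i = j then (1:ℝ) else 0)
      = !![0, 1, 0, 0; 0, 0, 1, 0; 0, 0, 0, 1; 1, 0, 0, 0] := by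
    ext i j; fin_cases i <;> fin_cases j <;> rfl
  rw [epsLC, h]
  simp [Matrix.det_succ_row_zero, Fin.sum_univ_succ, Fin.succAbove] <;> norm_num

lemma eps_1302 : epsLC 1 3 0 2 = -1 := by
  have h : (Matrix.of fun i j => if ![(1:Fin 4),3,0,2] i = j then (1:ℝ) else 0)
      = !![0, 1, 0, 0; 0, 0, 0, 1; 1, 0, 0, 0; 0, 0, 1, 0] := by
    ext i j; fin_cases i <;> fin_cases j <;> rfl
  rw [epsLC, h]
  simp [Matrix.det_succ_row_zero, Fin.sum_univ_succ, Fin.succAbove] <;> norm_num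

lemma eps_1320 : epsLC 1 3 2 0 = 1 := by
  have h : (Matrix.of fun i j => if ![(1:Fin 4),3,2,0] i = j then (1:ℝ) else 0)
      = !![0, 1, 0, 0; 0, 0, 0, 1; 0, 0, 1, 0; 1, 0, 0, 0] := by
    ext i j; fin_cases i <;> fin_cases j <;> rfl
  rw [epsLC, h]
  simp [Matrix.det_succ_row_zero, Fin.sum_univ_succ, Fin.succAbove] <;> norm_num

lemma eps_2013 : epsLC 2 0 1 3 = 1 := by
  have h : (Matrix.of fun i j => if ![(2:Fin 4),0,1,3] i = j then (1:ℝ) else 0)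
      = !![0, 0, 1, 0; 1, 0, 0, 0; 0, 1, 0, 0; 0, 0, 0, 1] := by
    ext i j; fin_cases i <;> fin_cases j <;> rfl
  rw [epsLC, h]
  simp [Matrix.det_succ_row_zero, Fin.sum_univ_succ, Fin.succAbove] <;> norm_num

lemma eps_2031 : epsLC 2 0 3 1 = -1 := by
  have h : (Matrix.of fun i j => if ![(2:Fin 4),0,3,1] i = j then (1:ℝ) else 0)
      = !![0, 0, 1, 0; 1, 0, 0, 0; 0, 0, 0, 1; 0, 1, 0, 0] := by
    ext i j; fin_cases i <;> fin_cases j <;> rfl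
  rw [epsLC, h]
  simp [Matrix.det_succ_row_zero, Fin.sum_univ_succ, Fin.succAbove] <;> norm_num

lemma eps_2103 : epsLC 2 1 0 3 = -1 := by
  have h : (Matrix.of fun i j => if ![(2:Fin 4),1,0,3] i = j then (1:ℝ) else 0)
      = !![0, 0, 1, 0; 0, 1, 0, 0; 1, 0, 0, 0; 0, 0, 0, 1] := by
    ext i j; fin_cases i <;> fin_cases j <;> rfl
  rw [epsLC, h]
  simp [Matrix.det_succ_row_zero, Fin.sum_univ_succ, Fin.succAbove] <;> norm_num

lemma eps_2130 : epsLC 2 1 3 0 = 1 := by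
  have h : (Matrix.of fun i j => if ![(2:Fin 4),1,3,0] i = j then (1:ℝ) else 0)
      = !![0, 0, 1, 0; 0, 1, 0, 0; 0, 0, 0, 1; 1, 0, 0, 0] := by
    ext i j; fin_cases i <;> fin_cases j <;> rfl
  rw [epsLC, h]
  simp [Matrix.det_succ_row_zero, Fin.sum_univ_succ, Fin.succAbove] <;> norm_num

lemma eps_2301 : epsLC 2 3 0 1 = 1 := by
  have h : (Matrix.of fun i j => if ![(2:Fin 4),3,0,1] i = j then (1:ℝ) else 0)
      = !![0, 0, 1, 0; 0, 0, 0, 1; 1, 0, 0, 0; 0, 1, 0, 0] := by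
    ext i j; fin_cases i <;> fin_cases j <;> rfl
  rw [epsLC, h]
  simp [Matrix.det_succ_row_zero, Fin.sum_univ_succ, Fin.succAbove] <;> norm_num

lemma eps_2310 : epsLC 2 3 1 0 = -1 := by
  have h : (Matrix.of fun i j => if ![(2:Fin 4),3,1,0] i = j then (1:ℝ) else 0)
      = !![0, 0, 1, 0; 0, 0, 0, 1; 0, 1, 0, 0; 1, 0, 0, 0] := by
    ext i j; fin_cases i <;> fin_cases j <;> rfl
  rw [epsLC, h]
  simp [Matrix.det_succ_row_zero, Fin.sum_univ_succ, Fin.succAbove] <;> norm_num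

lemma eps_3012 : epsLC 3 0 1 2 = -1 := by
  have h : (Matrix.of fun i j => if ![(3:Fin 4),0,1,2] i = j then (1:ℝ) else 0)
      = !![0, 0, 0, 1; 1, 0, 0, 0; 0, 1, 0, 0; 0, 0, 1, 0] := by
    ext i j; fin_cases i <;> fin_cases j <;> rfl
  rw [epsLC, h]
  simp [Matrix.det_succ_row_zero, Fin.sum_univ_succ, Fin.succAbove] <;> norm_num

lemma eps_3021 : epsLC 3 0 2 1 = 1 := by
  have h : (Matrix.of fun i j => if ![(3:Fin 4),0,2,1] i = j then (1:ℝ) else 0)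
      = !![0, 0, 0, 1; 1, 0, 0, 0; 0, 0, 1, 0; 0, 1, 0, 0] := by
    ext i j; fin_cases i <;> fin_cases j <;> rfl
  rw [epsLC, h]
  simp [Matrix.det_succ_row_zero, Fin.sum_univ_succ, Fin.succAbove] <;> norm_num

lemma eps_3102 : epsLC 3 1 0 2 = 1 := by
  have h : (Matrix.of fun i j => if ![(3:Fin 4),1,0,2] i = j then (1:ℝ) else 0)
      = !![0, 0, 0, 1; 0, 1, 0, 0; 1, 0, 0, 0; 0, 0, 1, 0] := by
    ext i j; fin_cases i <;> fin_cases j <;> rfl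
  rw [epsLC, h]
  simp [Matrix.det_succ_row_zero, Fin.sum_univ_succ, Fin.succAbove] <;> norm_num

lemma eps_3120 : epsLC 3 1 2 0 = -1 := by
  have h : (Matrix.of fun i j => if ![(3:Fin 4),1,2,0] i = j then (1:ℝ) else 0)
      = !![0, 0, 0, 1; 0, 1, 0, 0; 0, 0, 1, 0; 1, 0, 0, 0] := by
    ext i j; fin_cases i <;> fin_cases j <;> rfl
  rw [epsLC, h]
  simp [Matrix.det_succ_row_zero, Fin.sum_univ_succ, Fin.succAbove] <;> norm_num

lemma eps_3201 : epsLC 3 2 0 1 = -1 := by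
  have h : (Matrix.of fun i j => if ![(3:Fin 4),2,0,1] i = j then (1:ℝ) else 0)
      = !![0, 0, 0, 1; 0, 0, 1, 0; 1, 0, 0, 0; 0, 1, 0, 0] := by
    ext i j; fin_cases i <;> fin_cases j <;> rfl
  rw [epsLC, h]
  simp [Matrix.det_succ_row_zero, Fin.sum_univ_succ, Fin.succAbove] <;> norm_num

lemma eps_3210 : epsLC 3 2 1 0 = 1 := by
  have h : (Matrix.of fun i j => if ![(3:Fin 4),2,1,0] i = j then (1:ℝ) else 0)
      = !![0, 0, 0, 1; 0, 0, 1, 0; 0, 1, 0, 0; 1, 0, 0, 0] := by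
    ext i j; fin_cases i <;> fin_cases j <;> rfl
  rw [epsLC, h]
  simp [Matrix.det_succ_row_zero, Fin.sum_univ_succ, Fin.succAbove] <;> norm_num

set_option maxHeartbeats 2000000

/-- Canonical form of a nonzero null two-form: if both invariants
`I₁ = F_{μν}F^{μν}` and `I₂ = F*_{μν}F^{μν}` vanish, then `F = l ∧ w` with `l`
null and nonzero, and `w` spacelike and orthogonal to `l`. -/
theorem null_two_form_canonical_form (F : Matrix (Fin 4) (Fin 4) ℝ)
    (hanti : Fᵀ = -F) (hF : F ≠ 0)
    (hI1 : ∑ μ, ∑ ν, F μ ν * raiseF F μ ν = 0)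
    (hI2 : ∑ μ, ∑ ν, hodge F μ ν * raiseF F μ ν = 0) :
    ∃ l w : Fin 4 → ℝ, l ≠ 0 ∧ minkDot l l = 0 ∧ 0 < minkDot w w ∧ minkDot l w = 0 ∧
      ∀ μ ν, F μ ν = l μ * w ν - l ν * w μ := by
  have hA : ∀ i j, F j i = - F i j := by
    intro i j
    have h := congrFun (congrFun hanti i) j
    simpa [Matrix.transpose_apply, Matrix.neg_apply] using h
  have h00 : F 0 0 = 0 := by have := hA 0 0; linarith
  have h11 : F 1 1 = 0 := by have := hA 1 1; linarith
  have h22 : F 2 2 = 0 := by have := hA 2 2; linarith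
  have h33 : F 3 3 = 0 := by have := hA 3 3; linarith
  have hd : ∀ i j, raiseF F i j = ![(-1:ℝ),1,1,1] i * ![(-1:ℝ),1,1,1] j * F i j := by
    intro i j
    simp [raiseF, ηm, Matrix.diagonal_mul, Matrix.mul_diagonal]; ring
  simp only [Fin.sum_univ_four, hd, hodge, Matrix.of_apply] at hI1 hI2
  simp [epsLC_dup, eps_0123, eps_0132, eps_0213, eps_0231, eps_0312, eps_0321, eps_1023, eps_1032, eps_1203, eps_1230, eps_1302, eps_1320, eps_2013, eps_2031, eps_2103, eps_2130, eps_2301, eps_2310, eps_3012, eps_3021, eps_3102, eps_3120, eps_3201, eps_3210, h00, h11, h22, h33, hA 0 1, hA 0 2, hA 0 3, hA 1 2, hA 1 3, hA 2 3] at hI1 hI2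
  have h1 : F 0 1 ^ 2 + F 0 2 ^ 2 + F 0 3 ^ 2 = F 1 2 ^ 2 + F 1 3 ^ 2 + F 2 3 ^ 2 := by
    linear_combination (-1/2 : ℝ) * hI1
  have h2 : F 0 1 * F 2 3 - F 0 2 * F 1 3 + F 0 3 * F 1 2 = 0 := by
    linear_combination (-1/4 : ℝ) * hI2
  set u := F 0 1 with hu
  set v := F 0 2 with hv
  set w := F 0 3 with hw
  set x := F 1 2 with hx
  set y := F 1 3 with hy
  set z := F 2 3 with hz
  have hs : 0 < u^2 + v^2 + w^2 := by
    rcases lt_or_eq_of_le (by positivity : (0:ℝ) ≤ u^2+v^2+w^2) with h | h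
    · exact h
    exfalso
    have hu0 : u = 0 := by nlinarith [sq_nonneg u, sq_nonneg v, sq_nonneg w]
    have hv0 : v = 0 := by nlinarith [sq_nonneg u, sq_nonneg v, sq_nonneg w]
    have hw0 : w = 0 := by nlinarith [sq_nonneg u, sq_nonneg v, sq_nonneg w]
    have hx0 : x = 0 := by nlinarith [sq_nonneg x, sq_nonneg y, sq_nonneg z]
    have hy0 : y = 0 := by nlinarith [sq_nonneg x, sq_nonneg y, sq_nonneg z]
    have hz0 : z = 0 := by nlinarith [sq_nonneg x, sq_nonneg y, sq_nonneg z]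
    apply hF
    ext i j
    fin_cases i <;> fin_cases j <;>
      simp [h00, h11, h22, h33, hA 0 1, hA 0 2, hA 0 3, hA 1 2, hA 1 3, hA 2 3,
        ← hu, ← hv, ← hw, ← hx, ← hy, ← hz, hu0, hv0, hw0, hx0, hy0, hz0]
  set s := u^2 + v^2 + w^2 with hsdef
  have hsne : s ≠ 0 := ne_of_gt hs
  refine ⟨![-1, -(v*x + w*y)/s, (u*x - w*z)/s, (u*y + v*z)/s],
          ![0, -u, -v, -w], ?_, ?_, ?_, ?_, ?_⟩
  · intro h
    have := congrFun h 0
    simp at this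
  · simp [minkDot, ηm, Fin.sum_univ_four, Matrix.diagonal_apply]
    field_simp
    linear_combination (-(u^2 + v^2 + w^2)) * h1 - (u*z - v*y + w*x) * h2
  · have : minkDot ![0, -u, -v, -w] ![0, -u, -v, -w] = s := by
      simp [minkDot, ηm, Fin.sum_univ_four, Matrix.diagonal_apply]
      ring
    rw [this]; exact hs
  · simp [minkDot, ηm, Fin.sum_univ_four, Matrix.diagonal_apply]
    field_simp
    ring
  · intro μ ν
    fin_cases μ <;> fin_cases ν <;>
      simp [h00, h11, h22, h33, hA 0 1, hA 0 2, hA 0 3, hA 1 2, hA 1 3, hA 2 3,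
        ← hu, ← hv, ← hw, ← hx, ← hy, ← hz] <;>
      field_simp <;>
      first
        | ring1
        | linear_combination (u^2+v^2+w^2) * w * h2
        | linear_combination (u^2+v^2+w^2) * v * h2
        | linear_combination (u^2+v^2+w^2) * u * h2
        | linear_combination (-((u^2+v^2+w^2) * w)) * h2
        | linear_combination (-((u^2+v^2+w^2) * v)) * h2
        | linear_combination (-((u^2+v^2+w^2) * u)) * h2
        | linear_combination w * h2 + x * hsdef
        | linear_combination -v * h2 + y * hsdef
        | linear_combination -w * h2 - x * hsdef
        | linear_combination u * h2 + z * hsdef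
        | linear_combination v * h2 - y * hsdef
        | linear_combination -u * h2 - z * hsdef
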